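/- Let H be a Hilbert space, L a positive self-adjoint operator on H with spectral projections E_t = E([0,t)), and suppose for some f ∈ H, constants C, γ, δ > 0 one has ‖E_{1/t} f‖ ≤ C t^{−γδ} ‖T^γ f‖ for all t > 0 (T positive self-adjoint). Then also ‖e^{−tL} f‖ ≤ C' t^{−γδ} ‖T^γ f‖ for all t > 0, where C' = C (e−1) Σ_{j=1}^∞ e^{−j} j^{γδ} < ∞. -/

import Mathlib

open MeasureTheory ENNReal

lemma ennreal_iSup_rpow (c : ℕ → ℝ≥0∞) {p : ℝ} (hp : 0 < p) :
    (⨆ n, c n) ^ p = ⨆ n, (c n) ^ p :=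
  Monotone.map_iSup_of_continuousAt (ENNReal.continuous_rpow_const.continuousAt)
    (ENNReal.monotone_rpow_of_nonneg hp.le) (by simp [ENNReal.zero_rpow_of_pos hp])

lemma rpow_meas {g : ℝ → ℝ≥0∞} (hg : Measurable g) : Measurable fun l => (g l) ^ (2:ℝ) := by
  have : (fun l => (g l) ^ (2:ℝ)) = fun l => (g l) ^ (2:ℕ) := by
    funext l; rw [← ENNReal.rpow_natCast]; norm_num
  rw [this]; exact hg.pow_const _

lemma minkowski_fin {μ : Measure ℝ} (g : ℕ → ℝ → ℝ≥0∞) (hg : ∀ j, Measurable (g j)) (n : ℕ) :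
    (∫⁻ l, (∑ j ∈ Finset.range n, g j l) ^ (2:ℝ) ∂μ) ^ ((1:ℝ)/2) ≤
      ∑ j ∈ Finset.range n, (∫⁻ l, (g j l) ^ (2:ℝ) ∂μ) ^ ((1:ℝ)/2) := by
  induction n with
  | zero => simp [ENNReal.zero_rpow_of_pos]
  | succ n ih =>
      have hsum : Measurable fun l => ∑ j ∈ Finset.range n, g j l :=
        Finset.measurable_sum _ fun j _ => hg j
      calc (∫⁻ l, (∑ j ∈ Finset.range (n+1), g j l) ^ (2:ℝ) ∂μ) ^ ((1:ℝ)/2)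
          = (∫⁻ l, ((∑ j ∈ Finset.range n, g j l) + g n l) ^ (2:ℝ) ∂μ) ^ ((1:ℝ)/2) := by
            simp [Finset.sum_range_succ]
        _ ≤ (∫⁻ l, (∑ j ∈ Finset.range n, g j l) ^ (2:ℝ) ∂μ) ^ ((1:ℝ)/2)
              + (∫⁻ l, (g n l) ^ (2:ℝ) ∂μ) ^ ((1:ℝ)/2) :=
            ENNReal.lintegral_Lp_add_le hsum.aemeasurable (hg n).aemeasurable (by norm_num)
        _ ≤ _ := by rw [Finset.sum_range_succ]; exact add_le_add_left ih _

lemma minkowski_tsum {μ : Measure ℝ} (g : ℕ → ℝ → ℝ≥0∞) (hg : ∀ j, Measurable (g j)) :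
    (∫⁻ l, (∑' j, g j l) ^ (2:ℝ) ∂μ) ^ ((1:ℝ)/2) ≤
      ∑' j, (∫⁻ l, (g j l) ^ (2:ℝ) ∂μ) ^ ((1:ℝ)/2) := by
  have h1 : ∀ l, (∑' j, g j l) ^ (2:ℝ) = ⨆ n, (∑ j ∈ Finset.range n, g j l) ^ (2:ℝ) := by
    intro l
    rw [ENNReal.tsum_eq_iSup_sum' _ Finset.exists_nat_subset_range,
      ennreal_iSup_rpow _ (by norm_num : (0:ℝ) < 2)]
  calc (∫⁻ l, (∑' j, g j l) ^ (2:ℝ) ∂μ) ^ ((1:ℝ)/2)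
      = (⨆ n, ∫⁻ l, (∑ j ∈ Finset.range n, g j l) ^ (2:ℝ) ∂μ) ^ ((1:ℝ)/2) := by
        rw [← lintegral_iSup (fun n => rpow_meas (Finset.measurable_sum _ fun j _ => hg j))
          (fun m n hmn l => ENNReal.rpow_le_rpow
            (Finset.sum_le_sum_of_subset (Finset.range_subset_range.2 hmn)) (by norm_num))]
        simp only [h1]
    _ = ⨆ n, (∫⁻ l, (∑ j ∈ Finset.range n, g j l) ^ (2:ℝ) ∂μ) ^ ((1:ℝ)/2) :=
        ennreal_iSup_rpow _ (by norm_num)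
    _ ≤ ∑' j, (∫⁻ l, (g j l) ^ (2:ℝ) ∂μ) ^ ((1:ℝ)/2) := by
        apply iSup_le; intro n
        exact (minkowski_fin g hg n).trans (ENNReal.sum_le_tsum _)


lemma geom_tail (k : ℕ) :
    ∑' i : ℕ, Real.exp (-(((k + i : ℕ) : ℝ) + 1)) = Real.exp (-((k:ℝ)+1)) * (1 - Real.exp (-1))⁻¹ := by
  have h : ∀ i : ℕ, Real.exp (-(((k + i : ℕ) : ℝ) + 1)) = Real.exp (-((k:ℝ)+1)) * (Real.exp (-1))^i := by
    intro i
    rw [← Real.exp_nat_mul, ← Real.exp_add]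
    push_cast; ring_nf
  rw [tsum_congr h, tsum_mul_left, tsum_geometric_of_lt_one (Real.exp_nonneg _)
    (Real.exp_lt_one_iff.2 (by norm_num))]

lemma pointwise_bound {t l : ℝ} (ht : 0 < t) (hl : 0 ≤ l) :
    ENNReal.ofReal (Real.exp (-(2*t*l))) ≤
      (ENNReal.ofReal (Real.exp 1 - 1) *
        ∑' j : ℕ, (Set.Iio (((j:ℝ)+1)/t)).indicator
          (fun _ => ENNReal.ofReal (Real.exp (-((j:ℝ)+1)))) l) ^ (2:ℝ) := by
  set G := ∑' j : ℕ, (Set.Iio (((j:ℝ)+1)/t)).indicator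
      (fun _ => ENNReal.ofReal (Real.exp (-((j:ℝ)+1)))) l with hG
  have key : ENNReal.ofReal (Real.exp (-(t*l))) ≤ ENNReal.ofReal (Real.exp 1 - 1) * G := by
    set k := ⌊t * l⌋₊ with hk
    have htl : 0 ≤ t * l := mul_nonneg ht.le hl
    have h1 : ∑' i : ℕ, ENNReal.ofReal (Real.exp (-(((k + i : ℕ) : ℝ) + 1))) ≤ G := by
      rw [hG]
      apply ENNReal.summable.tsum_le_tsum_of_inj (fun i : ℕ => k + i) (add_right_injective k)
        (fun _ _ => zero_le) _ ENNReal.summable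
      intro i
      have hlt : l < (((k + i : ℕ) : ℝ) + 1) / t := by
        rw [lt_div_iff₀ ht]
        calc l * t = t * l := mul_comm _ _
          _ < (k : ℝ) + 1 := Nat.lt_floor_add_one _
          _ ≤ ((k + i : ℕ) : ℝ) + 1 := by push_cast; linarith [Nat.cast_nonneg (α := ℝ) i]
      push_cast at hlt
      simp [Set.indicator_of_mem (Set.mem_Iio.2 hlt)]
    have h2 : ∑' i : ℕ, ENNReal.ofReal (Real.exp (-(((k + i : ℕ) : ℝ) + 1)))
        = ENNReal.ofReal (Real.exp (-((k:ℝ)+1)) * (1 - Real.exp (-1))⁻¹) := by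
      have hsumm : Summable (fun i : ℕ => Real.exp (-(((k + i : ℕ) : ℝ) + 1))) := by
        have : Summable (fun i : ℕ => Real.exp (-((k:ℝ)+1)) * (Real.exp (-1))^i) :=
          (summable_geometric_of_lt_one (Real.exp_nonneg _)
            (Real.exp_lt_one_iff.2 (by norm_num))).mul_left _
        apply this.congr
        intro i; rw [← Real.exp_nat_mul, ← Real.exp_add]; push_cast; ring_nf
      rw [← geom_tail k, ENNReal.ofReal_tsum_of_nonneg (fun i => (Real.exp_nonneg _)) hsumm]
    have h3 : Real.exp (-(t*l)) ≤ (Real.exp 1 - 1) * (Real.exp (-((k:ℝ)+1)) * (1 - Real.exp (-1))⁻¹) := by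
      have he1 : (1:ℝ) < Real.exp 1 := by
        have := Real.add_one_lt_exp (x := 1) (by norm_num); linarith
      have hne : Real.exp 1 - 1 ≠ 0 := by linarith
      have hid : (Real.exp 1 - 1) * (Real.exp (-((k:ℝ)+1)) * (1 - Real.exp (-1))⁻¹)
          = Real.exp (-(k:ℝ)) := by
        have h1e : (1 - Real.exp (-1)) = (Real.exp 1 - 1) / Real.exp 1 := by
          rw [Real.exp_neg]; field_simp
        rw [h1e]
        have : Real.exp (-((k:ℝ)+1)) = Real.exp (-(k:ℝ)) / Real.exp 1 := by
          rw [← Real.exp_sub]; ring_nf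
        rw [this]
        field_simp
      rw [hid]
      exact Real.exp_le_exp.2 (by simpa using Nat.floor_le htl)
    calc ENNReal.ofReal (Real.exp (-(t*l)))
        ≤ ENNReal.ofReal ((Real.exp 1 - 1) * (Real.exp (-((k:ℝ)+1)) * (1 - Real.exp (-1))⁻¹)) :=
          ENNReal.ofReal_le_ofReal h3
      _ = ENNReal.ofReal (Real.exp 1 - 1) * ENNReal.ofReal (Real.exp (-((k:ℝ)+1)) * (1 - Real.exp (-1))⁻¹) := by
          rw [ENNReal.ofReal_mul]
          have := Real.add_one_lt_exp (x := 1) (by norm_num); linarith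
      _ = ENNReal.ofReal (Real.exp 1 - 1) * ∑' i : ℕ, ENNReal.ofReal (Real.exp (-(((k + i : ℕ) : ℝ) + 1))) := by rw [h2]
      _ ≤ _ := mul_le_mul_right h1 _
  calc ENNReal.ofReal (Real.exp (-(2*t*l)))
      = ENNReal.ofReal (Real.exp (-(t*l))) ^ (2:ℝ) := by
        have h4 : Real.exp (-(2*t*l)) = Real.exp (-(t*l)) ^ (2:ℕ) := by
          rw [← Real.exp_nat_mul]; norm_num; ring_nf
        rw [h4, ENNReal.ofReal_pow (Real.exp_nonneg _), ← ENNReal.rpow_natCast]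
        norm_num
    _ ≤ _ := ENNReal.rpow_le_rpow key (by norm_num)


lemma summ_part {a : ℝ} (ha : 0 < a) :
    Summable (fun j : ℕ => Real.exp (-((j : ℝ) + 1)) * ((j : ℝ) + 1) ^ a) := by
  set k := ⌈a⌉₊ with hk
  have hr1 : Real.exp (-1) < 1 := Real.exp_lt_one_iff.2 (by norm_num)
  have hbig : Summable (fun n : ℕ => (n:ℝ)^k * (Real.exp (-1))^n) :=
    summable_pow_mul_geometric_of_norm_lt_one k
      (by rw [Real.norm_eq_abs, abs_of_pos (Real.exp_pos _)]; exact hr1)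
  have hshift : Summable (fun j : ℕ => ((j+1:ℕ):ℝ)^k * (Real.exp (-1))^(j+1)) :=
    hbig.comp_injective (add_left_injective 1)
  apply hshift.of_nonneg_of_le
  · intro j; positivity
  · intro j
    have hj1 : (1:ℝ) ≤ (j:ℝ) + 1 := by linarith [Nat.cast_nonneg (α:=ℝ) j]
    have h1 : Real.exp (-((j:ℝ)+1)) = Real.exp (-1) ^ (j+1) := by
      rw [← Real.exp_nat_mul]; push_cast; ring_nf
    have h2 : ((j:ℝ)+1) ^ a ≤ ((j:ℝ)+1) ^ (k:ℝ) :=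
      Real.rpow_le_rpow_of_exponent_le hj1 (Nat.le_ceil a)
    rw [h1, mul_comm]
    apply mul_le_mul _ le_rfl (by positivity) (by positivity)
    calc ((j:ℝ)+1) ^ a ≤ ((j:ℝ)+1) ^ (k:ℝ) := h2
      _ = ((j:ℝ)+1) ^ k := Real.rpow_natCast _ _
      _ = ((j+1:ℕ):ℝ) ^ k := by push_cast; ring

theorem statement19
    {H : Type*} [NormedAddCommGroup H] [InnerProductSpace ℂ H] (f : H)
    (μ ν : Measure ℝ) [IsFiniteMeasure μ] [IsFiniteMeasure ν]
    (hμsupp : μ (Set.Iio 0) = 0) (hνsupp : ν (Set.Iio 0) = 0)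
    (hμtot : μ Set.univ = ENNReal.ofReal (‖f‖ ^ 2))
    (γ δ C : ℝ) (hγ : 0 < γ) (hδ : 0 < δ) (hC : 0 < C)
    (hloc : ∀ t > 0,
      (μ (Set.Ico 0 (1 / t))) ^ ((1:ℝ)/2) ≤
        ENNReal.ofReal (C * t ^ (-(γ * δ))) *
          (∫⁻ l, ENNReal.ofReal (l ^ (2 * γ)) ∂ν) ^ ((1:ℝ)/2)) :
    Summable (fun j : ℕ => Real.exp (-((j : ℝ) + 1)) * ((j : ℝ) + 1) ^ (γ * δ)) ∧
    ∀ t > 0,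
      (∫⁻ l, ENNReal.ofReal (Real.exp (-(2 * t * l))) ∂μ) ^ ((1:ℝ)/2) ≤
        ENNReal.ofReal
            ((C * (Real.exp 1 - 1) *
              ∑' j : ℕ, Real.exp (-((j : ℝ) + 1)) * ((j : ℝ) + 1) ^ (γ * δ)) *
              t ^ (-(γ * δ))) *
          (∫⁻ l, ENNReal.ofReal (l ^ (2 * γ)) ∂ν) ^ ((1:ℝ)/2) := by
  have hsum := summ_part (mul_pos hγ hδ)
  refine ⟨hsum, fun t ht => ?_⟩
  set A := (∫⁻ l, ENNReal.ofReal (l ^ (2 * γ)) ∂ν) ^ ((1:ℝ)/2) with hA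
  set c := ENNReal.ofReal (Real.exp 1 - 1) with hc
  set S := ∑' j : ℕ, Real.exp (-((j : ℝ) + 1)) * ((j : ℝ) + 1) ^ (γ * δ) with hS
  set g : ℕ → ℝ → ℝ≥0∞ := fun j l => (Set.Iio (((j:ℝ)+1)/t)).indicator
      (fun _ => ENNReal.ofReal (Real.exp (-((j:ℝ)+1)))) l with hg
  have hmeasg : ∀ j, Measurable (g j) :=
    fun j => measurable_const.indicator measurableSet_Iio
  have he1 : (1:ℝ) < Real.exp 1 := by
    have := Real.add_one_lt_exp (x := 1) (by norm_num); linarith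
  -- step 1: pointwise a.e. bound and monotonicity of the integral
  have hae : ∀ᵐ l ∂μ, 0 ≤ l := by
    rw [ae_iff]
    convert hμsupp using 2
    ext l; simp [not_le]
  have step1 : (∫⁻ l, ENNReal.ofReal (Real.exp (-(2 * t * l))) ∂μ)
      ≤ ∫⁻ l, (c * ∑' j, g j l) ^ (2:ℝ) ∂μ :=
    lintegral_mono_ae (hae.mono fun l hl => pointwise_bound ht hl)
  -- step 3: factor out the constant
  have hGmeas : Measurable fun l => ∑' j, g j l := Measurable.ennreal_tsum hmeasg
  have step3 : (∫⁻ l, (c * ∑' j, g j l) ^ (2:ℝ) ∂μ) ^ ((1:ℝ)/2)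
      = c * (∫⁻ l, (∑' j, g j l) ^ (2:ℝ) ∂μ) ^ ((1:ℝ)/2) := by
    have h1 : ∀ l : ℝ, (c * ∑' j, g j l) ^ (2:ℝ) = c ^ (2:ℝ) * (∑' j, g j l) ^ (2:ℝ) :=
      fun l => ENNReal.mul_rpow_of_nonneg _ _ (by norm_num)
    simp only [h1]
    rw [lintegral_const_mul _ (rpow_meas hGmeas),
      ENNReal.mul_rpow_of_nonneg _ _ (by norm_num), ← ENNReal.rpow_mul]
    norm_num
  -- step 5: bound each summand using hloc
  have hμIio : ∀ x : ℝ, 0 ≤ x → μ (Set.Iio x) = μ (Set.Ico 0 x) := by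
    intro x hx
    have hun : Set.Iio x = Set.Iio 0 ∪ Set.Ico 0 x := by
      ext l
      simp only [Set.mem_Iio, Set.mem_union, Set.mem_Ico]
      constructor
      · intro h
        by_cases h0 : l < 0
        · exact Or.inl h0
        · exact Or.inr ⟨le_of_not_gt h0, h⟩
      · rintro (h | ⟨_, h⟩)
        · exact lt_of_lt_of_le h hx
        · exact h
    refine le_antisymm ?_ (measure_mono (by rw [hun]; exact Set.subset_union_right))
    rw [hun]
    calc μ (Set.Iio 0 ∪ Set.Ico 0 x) ≤ μ (Set.Iio 0) + μ (Set.Ico 0 x) := measure_union_le _ _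
      _ = μ (Set.Ico 0 x) := by rw [hμsupp, zero_add]
  have step5 : ∀ j : ℕ, (∫⁻ l, (g j l) ^ (2:ℝ) ∂μ) ^ ((1:ℝ)/2)
      ≤ ENNReal.ofReal (C * t ^ (-(γ*δ)) * (Real.exp (-((j:ℝ)+1)) * ((j:ℝ)+1) ^ (γ*δ))) * A := by
    intro j
    have hj1 : (0:ℝ) < (j:ℝ) + 1 := by positivity
    have hjt : (0:ℝ) < t / ((j:ℝ)+1) := div_pos ht hj1
    have hconv : (1:ℝ) / (t / ((j:ℝ)+1)) = ((j:ℝ)+1) / t := one_div_div _ _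
    have hind : ∀ l : ℝ, (g j l) ^ (2:ℝ) = (Set.Iio (((j:ℝ)+1)/t)).indicator
        (fun _ => (ENNReal.ofReal (Real.exp (-((j:ℝ)+1)))) ^ (2:ℝ)) l := by
      intro l
      by_cases h : l ∈ Set.Iio (((j:ℝ)+1)/t) <;>
        simp [hg, Set.indicator_of_mem, Set.indicator_of_notMem, h,
          ENNReal.zero_rpow_of_pos (by norm_num : (0:ℝ) < 2)]
    have hint : (∫⁻ l, (g j l) ^ (2:ℝ) ∂μ)
        = (ENNReal.ofReal (Real.exp (-((j:ℝ)+1)))) ^ (2:ℝ) * μ (Set.Ico 0 (((j:ℝ)+1)/t)) := by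
      simp only [hind]
      rw [lintegral_indicator measurableSet_Iio, setLIntegral_const,
        hμIio _ (by positivity)]
    have hsplit : (t / ((j:ℝ)+1)) ^ (-(γ*δ)) = t ^ (-(γ*δ)) * ((j:ℝ)+1) ^ (γ*δ) := by
      rw [Real.div_rpow ht.le hj1.le, Real.rpow_neg hj1.le, div_inv_eq_mul]
    calc (∫⁻ l, (g j l) ^ (2:ℝ) ∂μ) ^ ((1:ℝ)/2)
        = ENNReal.ofReal (Real.exp (-((j:ℝ)+1))) * (μ (Set.Ico 0 (((j:ℝ)+1)/t))) ^ ((1:ℝ)/2) := by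
          rw [hint, ENNReal.mul_rpow_of_nonneg _ _ (by norm_num), ← ENNReal.rpow_mul]
          norm_num
      _ ≤ ENNReal.ofReal (Real.exp (-((j:ℝ)+1))) *
            (ENNReal.ofReal (C * (t / ((j:ℝ)+1)) ^ (-(γ*δ))) * A) := by
          apply mul_le_mul_right
          have := hloc (t / ((j:ℝ)+1)) hjt
          rwa [hconv] at this
      _ = ENNReal.ofReal (C * t ^ (-(γ*δ)) * (Real.exp (-((j:ℝ)+1)) * ((j:ℝ)+1) ^ (γ*δ))) * A := by
          rw [← mul_assoc, ← ENNReal.ofReal_mul (Real.exp_nonneg _), hsplit]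
          congr 2
          ring
  -- assemble
  have hsum2 : Summable (fun j : ℕ =>
      C * t ^ (-(γ*δ)) * (Real.exp (-((j:ℝ)+1)) * ((j:ℝ)+1) ^ (γ*δ))) := hsum.mul_left _
  calc (∫⁻ l, ENNReal.ofReal (Real.exp (-(2 * t * l))) ∂μ) ^ ((1:ℝ)/2)
      ≤ (∫⁻ l, (c * ∑' j, g j l) ^ (2:ℝ) ∂μ) ^ ((1:ℝ)/2) :=
        ENNReal.rpow_le_rpow step1 (by norm_num)
    _ = c * (∫⁻ l, (∑' j, g j l) ^ (2:ℝ) ∂μ) ^ ((1:ℝ)/2) := step3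
    _ ≤ c * ∑' j, (∫⁻ l, (g j l) ^ (2:ℝ) ∂μ) ^ ((1:ℝ)/2) :=
        mul_le_mul_right (minkowski_tsum g hmeasg) c
    _ ≤ c * ∑' j : ℕ, (ENNReal.ofReal (C * t ^ (-(γ*δ)) *
          (Real.exp (-((j:ℝ)+1)) * ((j:ℝ)+1) ^ (γ*δ))) * A) :=
        mul_le_mul_right (ENNReal.tsum_le_tsum step5) c
    _ = c * ((∑' j : ℕ, ENNReal.ofReal (C * t ^ (-(γ*δ)) *
          (Real.exp (-((j:ℝ)+1)) * ((j:ℝ)+1) ^ (γ*δ)))) * A) := by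
        rw [ENNReal.tsum_mul_right]
    _ = ENNReal.ofReal ((C * (Real.exp 1 - 1) * S) * t ^ (-(γ*δ))) * A := by
        rw [← mul_assoc, hc,
          ← ENNReal.ofReal_tsum_of_nonneg (fun j => by positivity) hsum2,
          ← ENNReal.ofReal_mul (by linarith)]
        congr 2
        rw [tsum_mul_left]
        ring
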